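/- The four vectors x₁ = (9/2, 9, 1/2, 1), x₂ = (3/2, 3+4i, 3/2+8i, 3), x₃ = (3/2, 3-4i, 3/2-8i, 3), x₄ = (9, 9/2, 1, 1/2) in ℂ⁴ all have the same Fourier intensity function: |x̂₁(ω)|² = |x̂₂(ω)|² = |x̂₃(ω)|² = |x̂₄(ω)|² for all ω on the unit circle. -/

import Mathlib

open Complex

set_option maxHeartbeats 1000000 in
theorem four_vectors_same_fourier_intensity :
    let f : (Fin 4 → ℂ) → ℂ → ℂ := fun x ω => x 0 + x 1 * ω + x 2 * ω ^ 2 + x 3 * ω ^ 3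
    let x₁ : Fin 4 → ℂ := ![9 / 2, 9, 1 / 2, 1]
    let x₂ : Fin 4 → ℂ := ![3 / 2, 3 + 4 * I, 3 / 2 + 8 * I, 3]
    let x₃ : Fin 4 → ℂ := ![3 / 2, 3 - 4 * I, 3 / 2 - 8 * I, 3]
    let x₄ : Fin 4 → ℂ := ![9, 9 / 2, 1, 1 / 2]
    ∀ ω : ℂ, ‖ω‖ = 1 →
      ‖f x₁ ω‖ ^ 2 = ‖f x₂ ω‖ ^ 2 ∧
      ‖f x₂ ω‖ ^ 2 = ‖f x₃ ω‖ ^ 2 ∧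
      ‖f x₃ ω‖ ^ 2 = ‖f x₄ ω‖ ^ 2 := by
  intro f x₁ x₂ x₃ x₄ ω hω
  have hω0 : ω ≠ 0 := by
    intro h; simp [h] at hω
  have hc : (starRingEnd ℂ) ω = ω⁻¹ := (Complex.inv_eq_conj hω).symm
  have key : ∀ a b : ℂ, a * (starRingEnd ℂ) a = b * (starRingEnd ℂ) b →
      ‖a‖ ^ 2 = ‖b‖ ^ 2 := by
    intro a b h
    rw [Complex.mul_conj, Complex.mul_conj] at h
    rw [Complex.sq_norm, Complex.sq_norm]
    exact_mod_cast h
  have e1 : f x₁ ω = 9/2 + 9*ω + (1/2)*ω^2 + ω^3 := by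
    simp [f, x₁, Matrix.cons_val_zero, Matrix.cons_val_one, Matrix.head_cons]
  have e2 : f x₂ ω = 3/2 + (3+4*I)*ω + (3/2+8*I)*ω^2 + 3*ω^3 := by
    simp [f, x₂, Matrix.cons_val_zero, Matrix.cons_val_one, Matrix.head_cons]
  have e3 : f x₃ ω = 3/2 + (3-4*I)*ω + (3/2-8*I)*ω^2 + 3*ω^3 := by
    simp [f, x₃, Matrix.cons_val_zero, Matrix.cons_val_one, Matrix.head_cons]
  have e4 : f x₄ ω = 9 + (9/2)*ω + ω^2 + (1/2)*ω^3 := by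
    simp [f, x₄, Matrix.cons_val_zero, Matrix.cons_val_one, Matrix.head_cons]
  rw [e1, e2, e3, e4]
  refine ⟨key _ _ ?_, key _ _ ?_, key _ _ ?_⟩ <;>
  · simp only [map_add, map_mul, map_pow, map_sub, map_div₀, Complex.conj_ofNat, map_one,
      Complex.conj_I, hc]
    field_simp
    ring_nf
    try (simp only [Complex.I_sq]; ring_nf)
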